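/- Let K = [0,1]² and let C₁, C₂ ⊆ K be compact sets such that C₁ separates the faces {0}×[0,1] and {1}×[0,1] (i.e., K \ C₁ is a disjoint union of two relatively open sets containing these two faces respectively), and C₂ similarly separates [0,1]×{0} and [0,1]×{1}. Then C₁ ∩ C₂ ≠ ∅. -/

import Mathlib

open Complex Finset Metric Set

noncomputable section

def Ksq : Set (ℝ × ℝ) := Set.Icc (0, 0) (1, 1)

lemma mem_Ksq {p : ℝ × ℝ} : p ∈ Ksq ↔ 0 ≤ p.1 ∧ 0 ≤ p.2 ∧ p.1 ≤ 1 ∧ p.2 ≤ 1 := by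
  simp [Ksq, Set.mem_Icc, Prod.le_def]; tauto

lemma tele (v : ℕ → ℂ) (hv : ∀ k, v k ≠ 0) (θ₀ : ℝ)
    (h₀ : Complex.exp (θ₀ * Complex.I) = v 0 / ‖v 0‖) :
    ∀ m, Complex.exp ((θ₀ + ∑ k ∈ Finset.range m, Complex.arg (v (k+1) / v k)) * Complex.I)
      = v m / ‖v m‖ := by
  intro m
  induction m with
  | zero => simpa using h₀
  | succ m ih =>
    have hw : v (m+1) / v m ≠ 0 := div_ne_zero (hv _) (hv _)
    have habs : (‖v (m+1) / v m‖ : ℂ) ≠ 0 := by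
      exact_mod_cast (norm_ne_zero_iff.mpr hw)
    have h1 : Complex.exp ((Complex.arg (v (m+1) / v m) : ℂ) * Complex.I)
        = (v (m+1) / v m) / ‖v (m+1) / v m‖ := by
      rw [eq_div_iff habs, mul_comm]
      exact Complex.norm_mul_exp_arg_mul_I _
    rw [Finset.sum_range_succ, Complex.ofReal_add, ← add_assoc, add_mul, Complex.exp_add, ih, h1]
    have h2 : ‖v (m+1) / v m‖ = ‖v (m+1)‖ / ‖v m‖ :=
      norm_div _ _
    rw [h2]
    have hm : (‖v m‖ : ℂ) ≠ 0 := by exact_mod_cast (norm_ne_zero_iff.mpr (hv m))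
    have hm1 : (‖v (m+1)‖ : ℂ) ≠ 0 := by
      exact_mod_cast (norm_ne_zero_iff.mpr (hv (m+1)))
    push_cast
    field_simp [hv m, hv (m+1)]

lemma exists_lift (H : ℝ × ℝ → ℂ) (hH : Continuous H) (h0 : ∀ p ∈ Ksq, H p ≠ 0) :
    ∃ Θ : ℝ × ℝ → ℝ, Continuous Θ ∧
      ∀ p ∈ Ksq, Complex.exp (Θ p * Complex.I) = H p / ‖H p‖ := by
  have hKc : IsCompact Ksq := isCompact_Icc
  have hK00 : ((0:ℝ), (0:ℝ)) ∈ Ksq := by rw [mem_Ksq]; norm_num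
  obtain ⟨p₀, hp₀K, hp₀min⟩ := hKc.exists_isMinOn ⟨_, hK00⟩
    (continuous_norm.comp hH).continuousOn
  set ε := ‖H p₀‖ with hεdef
  have hεpos : 0 < ε := norm_pos_iff.mpr (h0 p₀ hp₀K)
  have hmin : ∀ p ∈ Ksq, ε ≤ ‖H p‖ := fun p hp => hp₀min hp
  have huc := hKc.uniformContinuousOn_of_continuous hH.continuousOn
  rw [Metric.uniformContinuousOn_iff] at huc
  obtain ⟨δ, hδpos, hδ⟩ := huc ε hεpos
  obtain ⟨n, hn⟩ := exists_nat_one_div_lt hδpos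
  set N : ℕ := n + 1 with hNdef
  have hNpos : (0:ℝ) < N := by positivity
  have hstep : (1:ℝ) / N < δ := by exact_mod_cast hn
  -- clamp
  set c : ℝ → ℝ := fun x => max 0 (min x 1) with hcdef
  have hc_cont : Continuous c := continuous_const.max (continuous_id.min continuous_const)
  have hc0 : ∀ x, 0 ≤ c x := fun x => le_max_left _ _
  have hc1 : ∀ x, c x ≤ 1 := fun x => max_le (by norm_num) (min_le_right _ _)
  have hcid : ∀ x, 0 ≤ x → x ≤ 1 → c x = x := by
    intro x h1x h2x; simp [hcdef, min_eq_left h2x, max_eq_right h1x]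
  -- grid
  set u : ℕ → ℝ → ℝ := fun k x => min (c x) (k / N) with hudef
  have hu_cont : ∀ k, Continuous (fun x => u k x) := fun k => hc_cont.min continuous_const
  have hu0 : ∀ x, u 0 x = 0 := by intro x; simp [hudef, hc0 x]
  have huN : ∀ x, u N x = c x := by
    intro x
    have : (N:ℝ) / N = 1 := div_self (ne_of_gt hNpos)
    simp [hudef, this, min_eq_left (hc1 x)]
  have hu_mem : ∀ k x, 0 ≤ u k x ∧ u k x ≤ 1 := by
    intro k x
    constructor
    · exact le_min (hc0 x) (by positivity)
    · exact le_trans (min_le_left _ _) (hc1 x)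
  have hu_diff : ∀ k x, 0 ≤ u (k+1) x - u k x ∧ u (k+1) x - u k x ≤ 1 / N := by
    intro k x
    have hk1 : ((k:ℝ)+1) / N = (k:ℝ)/N + 1/N := by ring
    have hmono : u k x ≤ u (k+1) x := by
      apply min_le_min le_rfl
      push_cast
      have hpos : (0:ℝ) < (n:ℝ)+1 := by positivity
      gcongr
      linarith
    refine ⟨by linarith, ?_⟩
    rcases le_total (c x) ((k:ℝ)/N) with h | h
    · have h1 : u k x = c x := min_eq_left h
      have h2 : u (k+1) x ≤ c x := min_le_left _ _
      have : (0:ℝ) ≤ 1/N := by positivity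
      linarith
    · have h1 : u k x = (k:ℝ)/N := min_eq_right h
      have h2 : u (k+1) x ≤ ((k:ℝ)+1)/N := by
        refine le_trans (min_le_right _ _) ?_
        push_cast
        linarith [hk1]
      rw [h1]
      linarith [hk1]
  -- points on horizontal/vertical grid segments are close
  have key : ∀ a b : ℝ × ℝ, a ∈ Ksq → b ∈ Ksq → dist a b < δ → H a / H b ∈ Complex.slitPlane := by
    intro a b ha hb hab
    have hHb : H b ≠ 0 := h0 b hb
    have habs : ‖H a / H b - 1‖ < 1 := by
      have h1 : H a / H b - 1 = (H a - H b) / H b := by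
        field_simp
      rw [h1, norm_div]
      rw [div_lt_one (norm_pos_iff.mpr hHb)]
      calc ‖H a - H b‖ = dist (H a) (H b) := (Complex.dist_eq _ _).symm
        _ < ε := hδ a ha b hb hab
        _ ≤ ‖H b‖ := hmin b hb
    have hre : 0 < (H a / H b).re := by
      have h2 := Complex.abs_re_le_norm (H a / H b - 1)
      rw [Complex.sub_re, Complex.one_re] at h2
      have h3 : |(H a / H b).re - 1| < 1 := lt_of_le_of_lt h2 habs
      have h4 := abs_lt.mp h3
      linarith [h4.1]
    exact Complex.mem_slitPlane_iff.mpr (Or.inl hre)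
  have hmemb : ∀ k x, ((u k x, (0:ℝ)) : ℝ × ℝ) ∈ Ksq := by
    intro k x; rw [mem_Ksq]
    exact ⟨(hu_mem k x).1, le_refl 0, (hu_mem k x).2, by norm_num⟩
  have hmemv : ∀ k (x : ℝ × ℝ), ((c x.1, u k x.2) : ℝ × ℝ) ∈ Ksq := by
    intro k x; rw [mem_Ksq]
    exact ⟨hc0 _, (hu_mem k x.2).1, hc1 _, (hu_mem k x.2).2⟩
  have hdisth : ∀ (a b c' : ℝ), dist ((a, c') : ℝ × ℝ) ((b, c') : ℝ × ℝ) = |a - b| := by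
    intro a b c'
    rw [Prod.dist_eq]
    simp [Real.dist_eq]
  have hdistv : ∀ (a b c' : ℝ), dist ((c', a) : ℝ × ℝ) ((c', b) : ℝ × ℝ) = |a - b| := by
    intro a b c'
    rw [Prod.dist_eq]
    simp [Real.dist_eq]
  set bF : ℕ → (ℝ × ℝ) → ℂ := fun k x => H (u (k+1) x.1, 0) / H (u k x.1, 0) with hbFdef
  set vF : ℕ → (ℝ × ℝ) → ℂ := fun k x => H (c x.1, u (k+1) x.2) / H (c x.1, u k x.2) with hvFdef
  have hbslit : ∀ k x, bF k x ∈ Complex.slitPlane := by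
    intro k x
    apply key _ _ (hmemb (k+1) x.1) (hmemb k x.1)
    rw [hdisth]
    rw [_root_.abs_of_nonneg (hu_diff k x.1).1]
    exact lt_of_le_of_lt (hu_diff k x.1).2 hstep
  have hvslit : ∀ k x, vF k x ∈ Complex.slitPlane := by
    intro k x
    apply key _ _ (hmemv (k+1) x) (hmemv k x)
    rw [hdistv]
    rw [_root_.abs_of_nonneg (hu_diff k x.2).1]
    exact lt_of_le_of_lt (hu_diff k x.2).2 hstep
  have hbF_cont : ∀ k, Continuous (bF k) := by
    intro k
    exact (hH.comp (((hu_cont (k+1)).comp continuous_fst).prodMk continuous_const)).div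
      (hH.comp (((hu_cont k).comp continuous_fst).prodMk continuous_const))
      (fun x => h0 _ (hmemb k x.1))
  have hvF_cont : ∀ k, Continuous (vF k) := by
    intro k
    exact (hH.comp ((hc_cont.comp continuous_fst).prodMk
        ((hu_cont (k+1)).comp continuous_snd))).div
      (hH.comp ((hc_cont.comp continuous_fst).prodMk ((hu_cont k).comp continuous_snd)))
      (fun x => h0 _ (hmemv k x))
  have harg_cont : ∀ (F : (ℝ × ℝ) → ℂ), Continuous F → (∀ x, F x ∈ Complex.slitPlane) →
      Continuous (fun x => Complex.arg (F x)) := by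
    intro F hF hs
    rw [continuous_iff_continuousAt]
    exact fun x => (Complex.continuousAt_arg (hs x)).comp hF.continuousAt
  refine ⟨fun x => (Complex.arg (H (0, 0)) + ∑ k ∈ Finset.range N, Complex.arg (bF k x))
      + ∑ k ∈ Finset.range N, Complex.arg (vF k x), ?_, ?_⟩
  · apply Continuous.add
    · apply Continuous.add continuous_const
      exact continuous_finset_sum _ (fun k _ => harg_cont _ (hbF_cont k) (hbslit k))
    · exact continuous_finset_sum _ (fun k _ => harg_cont _ (hvF_cont k) (hvslit k))
  · intro p hp
    rw [mem_Ksq] at hp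
    have hct : c p.1 = p.1 := hcid _ hp.1 hp.2.2.1
    have hcs : c p.2 = p.2 := hcid _ hp.2.1 hp.2.2.2
    have step1 := tele (fun k => H (u k p.1, 0)) (fun k => h0 _ (hmemb k p.1))
      (Complex.arg (H (0, 0)))
      (by
        simp only [hu0]
        rw [eq_div_iff (by exact_mod_cast norm_ne_zero_iff.mpr (h0 _ hK00)), mul_comm]
        exact Complex.norm_mul_exp_arg_mul_I _) N
    rw [huN] at step1
    have step2 := tele (fun k => H (c p.1, u k p.2)) (fun k => h0 _ (hmemv k p))
      (Complex.arg (H (0, 0)) + ∑ k ∈ Finset.range N, Complex.arg (bF k p))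
      (by simp only [hu0]; push_cast; push_cast at step1; exact step1) N
    rw [huN] at step2
    rw [show H (c p.1, c p.2) = H p by rw [hct, hcs]] at step2
    push_cast
    push_cast at step2
    exact step2

lemma exists_signed (C Q Q' : Set (ℝ × ℝ)) (hQ : IsOpen Q) (hQ' : IsOpen Q')
    (hdec : Ksq \ C = (Ksq ∩ Q) ∪ (Ksq ∩ Q')) (hdisj : Disjoint (Ksq ∩ Q) (Ksq ∩ Q'))
    (hC : C ⊆ Ksq) (hne : (Ksq ∩ Q).Nonempty) (hne' : (Ksq ∩ Q').Nonempty) :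
    ∃ f : ℝ × ℝ → ℝ, Continuous f ∧ (∀ p ∈ Ksq ∩ Q, f p < 0) ∧ (∀ p ∈ Ksq ∩ Q', 0 < f p) ∧
      (∀ p ∈ Ksq, f p = 0 → p ∈ C) := by
  have hQsub : Ksq ∩ Q ⊆ Ksq \ C := hdec ▸ Set.subset_union_left
  have hQ'sub : Ksq ∩ Q' ⊆ Ksq \ C := hdec ▸ Set.subset_union_right
  -- the two "closed sides"
  set S : Set (ℝ × ℝ) := C ∪ (Ksq ∩ Q) with hSdef
  set S' : Set (ℝ × ℝ) := C ∪ (Ksq ∩ Q') with hS'def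
  have hSne : S.Nonempty := hne.mono Set.subset_union_right
  have hS'ne : S'.Nonempty := hne'.mono Set.subset_union_right
  -- Q is disjoint from S'
  have hQS' : Q ∩ S' = ∅ := by
    apply Set.eq_empty_iff_forall_notMem.mpr
    rintro x ⟨hxQ, hxS'⟩
    rcases hxS' with hxC | hxQ'
    · exact (hQsub ⟨hC hxC, hxQ⟩).2 hxC
    · exact Set.disjoint_left.mp hdisj ⟨hxQ'.1, hxQ⟩ hxQ'
  have hQ'S : Q' ∩ S = ∅ := by
    apply Set.eq_empty_iff_forall_notMem.mpr
    rintro x ⟨hxQ', hxS⟩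
    rcases hxS with hxC | hxQ
    · exact (hQ'sub ⟨hC hxC, hxQ'⟩).2 hxC
    · exact Set.disjoint_left.mp hdisj hxQ ⟨hxQ.1, hxQ'⟩
  have hnotclos : ∀ x ∈ Q, x ∉ closure S' := by
    intro x hxQ hxcl
    have := hQ.inter_closure (t := S') ⟨hxQ, hxcl⟩
    rw [hQS'] at this
    simpa using this
  have hnotclos' : ∀ x ∈ Q', x ∉ closure S := by
    intro x hxQ' hxcl
    have := hQ'.inter_closure (t := S) ⟨hxQ', hxcl⟩
    rw [hQ'S] at this
    simpa using this
  refine ⟨fun p => infDist p S - infDist p S', ?_, ?_, ?_, ?_⟩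
  · exact (continuous_infDist_pt S).sub (continuous_infDist_pt S')
  · intro p hp
    have h1 : infDist p S = 0 := infDist_zero_of_mem (Or.inr hp)
    have h2 : infDist p S' ≠ 0 := fun h =>
      hnotclos p hp.2 ((mem_closure_iff_infDist_zero hS'ne).mpr h)
    have h3 : 0 < infDist p S' := lt_of_le_of_ne infDist_nonneg (Ne.symm h2)
    simp only [h1]
    linarith
  · intro p hp
    have h1 : infDist p S' = 0 := infDist_zero_of_mem (Or.inr hp)
    have h2 : infDist p S ≠ 0 := fun h =>
      hnotclos' p hp.2 ((mem_closure_iff_infDist_zero hSne).mpr h)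
    have h3 : 0 < infDist p S := lt_of_le_of_ne infDist_nonneg (Ne.symm h2)
    simp only [h1]
    linarith
  · intro p hp hf
    by_contra hpC
    have hpK : p ∈ Ksq \ C := ⟨hp, hpC⟩
    rw [hdec] at hpK
    simp only at hf
    rcases hpK with hpQ | hpQ'
    · have h1 : infDist p S = 0 := infDist_zero_of_mem (Or.inr hpQ)
      have h2 : infDist p S' ≠ 0 := fun h =>
        hnotclos p hpQ.2 ((mem_closure_iff_infDist_zero hS'ne).mpr h)
      have h3 : 0 < infDist p S' := lt_of_le_of_ne infDist_nonneg (Ne.symm h2)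
      rw [h1] at hf
      linarith
    · have h1 : infDist p S' = 0 := infDist_zero_of_mem (Or.inr hpQ')
      have h2 : infDist p S ≠ 0 := fun h =>
        hnotclos' p hpQ'.2 ((mem_closure_iff_infDist_zero hSne).mpr h)
      have h3 : 0 < infDist p S := lt_of_le_of_ne infDist_nonneg (Ne.symm h2)
      rw [h1] at hf
      linarith

def Bdry : Set (ℝ × ℝ) := {p | p ∈ Ksq ∧ (p.1 = 0 ∨ p.1 = 1 ∨ p.2 = 0 ∨ p.2 = 1)}

lemma Bdry_preconnected : IsPreconnected Bdry := by
  set A : Set (ℝ × ℝ) := (fun t : ℝ => ((0:ℝ), t)) '' Set.Icc 0 1 with hAdef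
  set B : Set (ℝ × ℝ) := (fun t : ℝ => (t, (0:ℝ))) '' Set.Icc 0 1 with hBdef
  set Cs : Set (ℝ × ℝ) := (fun t : ℝ => ((1:ℝ), t)) '' Set.Icc 0 1 with hCdef
  set D : Set (ℝ × ℝ) := (fun t : ℝ => (t, (1:ℝ))) '' Set.Icc 0 1 with hDdef
  have hA : IsPreconnected A := isPreconnected_Icc.image _ (by fun_prop)
  have hB : IsPreconnected B := isPreconnected_Icc.image _ (by fun_prop)
  have hC : IsPreconnected Cs := isPreconnected_Icc.image _ (by fun_prop)
  have hD : IsPreconnected D := isPreconnected_Icc.image _ (by fun_prop)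
  have hBdry : Bdry = ((A ∪ B) ∪ Cs) ∪ D := by
    ext p
    simp only [hAdef, hBdef, hCdef, hDdef, Bdry, Set.mem_setOf_eq, mem_Ksq, Set.mem_union,
      Set.mem_image, Set.mem_Icc]
    constructor
    · rintro ⟨⟨h1, h2, h3, h4⟩, h5 | h5 | h5 | h5⟩
      · exact Or.inl (Or.inl (Or.inl ⟨p.2, ⟨h2, h4⟩, by rw [← h5]⟩))
      · exact Or.inl (Or.inr ⟨p.2, ⟨h2, h4⟩, by rw [← h5]⟩)
      · exact Or.inl (Or.inl (Or.inr ⟨p.1, ⟨h1, h3⟩, by rw [← h5]⟩))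
      · exact Or.inr ⟨p.1, ⟨h1, h3⟩, by rw [← h5]⟩
    · rintro (((⟨t, ⟨h1, h2⟩, rfl⟩ | ⟨t, ⟨h1, h2⟩, rfl⟩) | ⟨t, ⟨h1, h2⟩, rfl⟩) |
        ⟨t, ⟨h1, h2⟩, rfl⟩)
      · exact ⟨⟨le_refl 0, h1, by norm_num, h2⟩, Or.inl rfl⟩
      · exact ⟨⟨h1, le_refl 0, h2, by norm_num⟩, Or.inr (Or.inr (Or.inl rfl))⟩
      · exact ⟨⟨by norm_num, h1, le_refl 1, h2⟩, Or.inr (Or.inl rfl)⟩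
      · exact ⟨⟨h1, by norm_num, h2, le_refl 1⟩, Or.inr (Or.inr (Or.inr rfl))⟩
  rw [hBdry]
  have mA : ((0:ℝ), (1:ℝ)) ∈ A := ⟨1, by norm_num⟩
  have mB : ((1:ℝ), (0:ℝ)) ∈ B := ⟨1, by norm_num⟩
  have mAB : ((0:ℝ), (0:ℝ)) ∈ A := ⟨0, by norm_num⟩
  have mBA : ((0:ℝ), (0:ℝ)) ∈ B := ⟨0, by norm_num⟩
  have mC : ((1:ℝ), (0:ℝ)) ∈ Cs := ⟨0, by norm_num⟩
  have mD : ((0:ℝ), (1:ℝ)) ∈ D := ⟨0, by norm_num⟩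
  have h1 : IsPreconnected (A ∪ B) := IsPreconnected.union _ mAB mBA hA hB
  have h2 : IsPreconnected ((A ∪ B) ∪ Cs) := IsPreconnected.union _ (Or.inr mB) mC h1 hC
  exact IsPreconnected.union _ (Or.inl (Or.inl mA)) mD h2 hD

/-- `C` separates `B` and `B'` within `K`: `K \ C` is the disjoint union of two
relatively open subsets of `K` containing `B` and `B'` respectively. -/
def SeparatesIn (K C B B' : Set (ℝ × ℝ)) : Prop :=
  ∃ Q Q' : Set (ℝ × ℝ), IsOpen Q ∧ IsOpen Q' ∧
    K \ C = (K ∩ Q) ∪ (K ∩ Q') ∧ Disjoint (K ∩ Q) (K ∩ Q') ∧ B ⊆ Q ∧ B' ⊆ Q'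

/-- Cube Separation Theorem in dimension 2: if the compact set `C₁ ⊆ [0,1]²` separates
the left and right faces of the square, and the compact set `C₂` separates the bottom
and top faces, then `C₁ ∩ C₂ ≠ ∅`. -/
theorem cube_separation (C₁ C₂ : Set (ℝ × ℝ))
    (hC₁ : IsCompact C₁) (hC₂ : IsCompact C₂)
    (h₁ : C₁ ⊆ Set.Icc (0, 0) (1, 1)) (h₂ : C₂ ⊆ Set.Icc (0, 0) (1, 1))
    (hsep₁ : SeparatesIn (Set.Icc (0, 0) (1, 1)) C₁
      {p | p ∈ Set.Icc ((0 : ℝ), (0 : ℝ)) (1, 1) ∧ p.1 = 0}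
      {p | p ∈ Set.Icc ((0 : ℝ), (0 : ℝ)) (1, 1) ∧ p.1 = 1})
    (hsep₂ : SeparatesIn (Set.Icc (0, 0) (1, 1)) C₂
      {p | p ∈ Set.Icc ((0 : ℝ), (0 : ℝ)) (1, 1) ∧ p.2 = 0}
      {p | p ∈ Set.Icc ((0 : ℝ), (0 : ℝ)) (1, 1) ∧ p.2 = 1}) :
    (C₁ ∩ C₂).Nonempty := by
  by_contra hcon
  rw [Set.not_nonempty_iff_eq_empty] at hcon
  obtain ⟨Q₁, Q₁', hQ₁o, hQ₁'o, hdec₁, hdisj₁, hB₁, hB₁'⟩ := hsep₁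
  obtain ⟨Q₂, Q₂', hQ₂o, hQ₂'o, hdec₂, hdisj₂, hB₂, hB₂'⟩ := hsep₂
  -- corner memberships
  have h00 : ((0:ℝ), (0:ℝ)) ∈ Ksq := by rw [mem_Ksq]; norm_num
  have h10 : ((1:ℝ), (0:ℝ)) ∈ Ksq := by rw [mem_Ksq]; norm_num
  have h01 : ((0:ℝ), (1:ℝ)) ∈ Ksq := by rw [mem_Ksq]; norm_num
  -- face membership characterization
  have hfaceL : ∀ p : ℝ × ℝ, p ∈ Ksq → p.1 = 0 → p ∈ Q₁ :=
    fun p hp h => hB₁ ⟨hp, h⟩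
  have hfaceR : ∀ p : ℝ × ℝ, p ∈ Ksq → p.1 = 1 → p ∈ Q₁' :=
    fun p hp h => hB₁' ⟨hp, h⟩
  have hfaceB : ∀ p : ℝ × ℝ, p ∈ Ksq → p.2 = 0 → p ∈ Q₂ :=
    fun p hp h => hB₂ ⟨hp, h⟩
  have hfaceT : ∀ p : ℝ × ℝ, p ∈ Ksq → p.2 = 1 → p ∈ Q₂' :=
    fun p hp h => hB₂' ⟨hp, h⟩
  obtain ⟨f, hfc, hfneg, hfpos, hfzero⟩ := exists_signed C₁ Q₁ Q₁' hQ₁o hQ₁'o hdec₁ hdisj₁ h₁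
    ⟨_, h00, hfaceL _ h00 rfl⟩ ⟨_, h10, hfaceR _ h10 rfl⟩
  obtain ⟨g, hgc, hgneg, hgpos, hgzero⟩ := exists_signed C₂ Q₂ Q₂' hQ₂o hQ₂'o hdec₂ hdisj₂ h₂
    ⟨_, h00, hfaceB _ h00 rfl⟩ ⟨_, h01, hfaceT _ h01 rfl⟩
  -- the complex map
  set H : ℝ × ℝ → ℂ := fun p => (f p : ℂ) + (g p : ℂ) * Complex.I with hHdef
  have hHre : ∀ p, (H p).re = f p := by intro p; simp [hHdef]
  have hHim : ∀ p, (H p).im = g p := by intro p; simp [hHdef]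
  have hHc : Continuous H := by
    apply Continuous.add
    · exact Complex.continuous_ofReal.comp hfc
    · exact (Complex.continuous_ofReal.comp hgc).mul continuous_const
  have h0 : ∀ p ∈ Ksq, H p ≠ 0 := by
    intro p hp hzero
    have hf0 : f p = 0 := by rw [← hHre p, hzero]; simp
    have hg0 : g p = 0 := by rw [← hHim p, hzero]; simp
    have hp1 : p ∈ C₁ := hfzero p hp hf0
    have hp2 : p ∈ C₂ := hgzero p hp hg0
    have : p ∈ C₁ ∩ C₂ := ⟨hp1, hp2⟩
    rw [hcon] at this
    exact this
  obtain ⟨Θ, hΘc, hΘ⟩ := exists_lift H hHc h0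
  -- the reference vector field
  set ι : ℝ × ℝ → ℂ := fun p => ((p.1 - 1/2 : ℝ) : ℂ) + ((p.2 - 1/2 : ℝ) : ℂ) * Complex.I
    with hιdef
  have hιre : ∀ p, (ι p).re = p.1 - 1/2 := by intro p; simp [hιdef]
  have hιim : ∀ p, (ι p).im = p.2 - 1/2 := by intro p; simp [hιdef]
  have hιc : Continuous ι := by
    apply Continuous.add
    · exact Complex.continuous_ofReal.comp (continuous_fst.sub continuous_const)
    · exact (Complex.continuous_ofReal.comp (continuous_snd.sub continuous_const)).mul
        continuous_const
  -- signs on faces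
  have hsgnL : ∀ p ∈ Bdry, p.1 = 0 → f p < 0 :=
    fun p hp h => hfneg p ⟨hp.1, hfaceL p hp.1 h⟩
  have hsgnR : ∀ p ∈ Bdry, p.1 = 1 → 0 < f p :=
    fun p hp h => hfpos p ⟨hp.1, hfaceR p hp.1 h⟩
  have hsgnB : ∀ p ∈ Bdry, p.2 = 0 → g p < 0 :=
    fun p hp h => hgneg p ⟨hp.1, hfaceB p hp.1 h⟩
  have hsgnT : ∀ p ∈ Bdry, p.2 = 1 → 0 < g p :=
    fun p hp h => hgpos p ⟨hp.1, hfaceT p hp.1 h⟩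
  have hι_ne : ∀ p ∈ Bdry, ι p ≠ 0 := by
    intro p hp hzero
    rcases hp.2 with h | h | h | h
    · have := hιre p; rw [hzero, h] at this; norm_num at this
    · have := hιre p; rw [hzero, h] at this; norm_num at this
    · have := hιim p; rw [hzero, h] at this; norm_num at this
    · have := hιim p; rw [hzero, h] at this; norm_num at this
  have hslit : ∀ p ∈ Bdry, H p / ι p ∈ Complex.slitPlane := by
    intro p hp
    rw [Complex.mem_slitPlane_iff]
    by_contra hcontra
    push_neg at hcontra
    obtain ⟨hre, him⟩ := hcontra
    set z := H p / ι p with hzdef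
    have hHz : H p = z * ι p := (div_mul_cancel₀ _ (hι_ne p hp)).symm
    have hfre : f p = z.re * (p.1 - 1/2) := by
      rw [← hHre p, hHz, Complex.mul_re, hιre, hιim, him]
      ring
    have hgim : g p = z.re * (p.2 - 1/2) := by
      rw [← hHim p, hHz, Complex.mul_im, hιre, hιim, him]
      ring
    rcases hp.2 with h | h | h | h
    · have h1 := hsgnL p hp h
      rw [hfre, h] at h1
      nlinarith
    · have h1 := hsgnR p hp h
      rw [hfre, h] at h1
      nlinarith
    · have h1 := hsgnB p hp h
      rw [hgim, h] at h1
      nlinarith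
    · have h1 := hsgnT p hp h
      rw [hgim, h] at h1
      nlinarith
  -- the boundary angle function
  set ψ : ℝ × ℝ → ℝ := fun p => Θ p - Complex.arg (H p / ι p) with hψdef
  have hψc : ContinuousOn ψ Bdry := by
    apply ContinuousOn.sub hΘc.continuousOn
    have hF : ContinuousOn (fun p => H p / ι p) Bdry :=
      hHc.continuousOn.div hιc.continuousOn (fun p hp => hι_ne p hp)
    exact fun p hp => ContinuousAt.comp_continuousWithinAt (f := fun p => H p / ι p)
      (Complex.continuousAt_arg (hslit p hp)) (hF p hp)
  have hψexp : ∀ p ∈ Bdry, Complex.exp (ψ p * Complex.I) = ι p / ‖ι p‖ := by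
    intro p hp
    have hw : H p / ι p ≠ 0 := Complex.slitPlane_ne_zero (hslit p hp)
    have hargw : Complex.exp ((Complex.arg (H p / ι p) : ℂ) * Complex.I)
        = (H p / ι p) / ‖H p / ι p‖ := by
      rw [eq_div_iff (by exact_mod_cast norm_ne_zero_iff.mpr hw), mul_comm]
      exact Complex.norm_mul_exp_arg_mul_I _
    have hψp : (ψ p : ℂ) = (Θ p : ℂ) - (Complex.arg (H p / ι p) : ℂ) := by
      simp [hψdef]
    rw [hψp, sub_mul, Complex.exp_sub, hΘ p hp.1, hargw, norm_div]
    have hH0 : (‖H p‖ : ℂ) ≠ 0 := by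
      exact_mod_cast norm_ne_zero_iff.mpr (h0 p hp.1)
    have hι0 : (‖ι p‖ : ℂ) ≠ 0 := by
      exact_mod_cast norm_ne_zero_iff.mpr (hι_ne p hp)
    have hHp0 : H p ≠ 0 := h0 p hp.1
    have hιp0 : ι p ≠ 0 := hι_ne p hp
    push_cast
    field_simp
  -- antipodal map
  set σ : ℝ × ℝ → ℝ × ℝ := fun p => (1 - p.1, 1 - p.2) with hσdef
  have hσc : Continuous σ := by fun_prop
  have hσBd : ∀ p ∈ Bdry, σ p ∈ Bdry := by
    intro p hp
    obtain ⟨hpK, hpf⟩ := hp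
    rw [mem_Ksq] at hpK
    obtain ⟨ha, hb, hc', hd'⟩ := hpK
    constructor
    · rw [mem_Ksq]
      simp only [hσdef]
      exact ⟨by linarith, by linarith, by linarith, by linarith⟩
    · rcases hpf with h | h | h | h
      · exact Or.inr (Or.inl (by simp [hσdef, h]))
      · exact Or.inl (by simp [hσdef, h])
      · exact Or.inr (Or.inr (Or.inr (by simp [hσdef, h])))
      · exact Or.inr (Or.inr (Or.inl (by simp [hσdef, h])))
  have hισ : ∀ p, ι (σ p) = -(ι p) := by
    intro p
    simp only [hιdef, hσdef]
    push_cast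
    ring
  have hσσ : ∀ p, σ (σ p) = p := by
    intro p
    simp [hσdef]
  -- the difference function
  set d : ℝ × ℝ → ℝ := fun p => ψ (σ p) - ψ p with hddef
  have hdc : ContinuousOn d Bdry := by
    apply ContinuousOn.sub
    · exact hψc.comp hσc.continuousOn hσBd
    · exact hψc
  have hdexp : ∀ p ∈ Bdry, Complex.exp (d p * Complex.I) = -1 := by
    intro p hp
    have h1 : (d p : ℂ) = (ψ (σ p) : ℂ) - (ψ p : ℂ) := by simp [hddef]
    rw [h1, sub_mul, Complex.exp_sub, hψexp _ (hσBd p hp), hψexp p hp, hισ p]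
    have hι0 : (‖ι p‖ : ℂ) ≠ 0 := by
      exact_mod_cast norm_ne_zero_iff.mpr (hι_ne p hp)
    have hιp0 : ι p ≠ 0 := hι_ne p hp
    rw [norm_neg]
    field_simp
  -- base point
  have hp₀ : ((0:ℝ), (0:ℝ)) ∈ Bdry := ⟨h00, Or.inl rfl⟩
  have hq₀ : σ ((0:ℝ), (0:ℝ)) ∈ Bdry := hσBd _ hp₀
  have hdq₀ : d (σ ((0:ℝ), (0:ℝ))) = -d ((0:ℝ), (0:ℝ)) := by
    simp only [hddef, hσσ]
    ring
  have hd0 : d ((0:ℝ), (0:ℝ)) ≠ 0 := by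
    intro h
    have := hdexp _ hp₀
    rw [h] at this
    simp at this
    norm_num at this
  -- intermediate value
  have hmain : ∃ r ∈ Bdry, d r = 0 := by
    rcases lt_or_gt_of_ne hd0 with h | h
    · have h0mem : (0:ℝ) ∈ Set.Icc (d ((0:ℝ), (0:ℝ))) (d (σ ((0:ℝ), (0:ℝ)))) := by
        rw [hdq₀]; constructor <;> linarith
      obtain ⟨r, hr, hdr⟩ := Bdry_preconnected.intermediate_value hp₀ hq₀ hdc h0mem
      exact ⟨r, hr, hdr⟩
    · have h0mem : (0:ℝ) ∈ Set.Icc (d (σ ((0:ℝ), (0:ℝ)))) (d ((0:ℝ), (0:ℝ))) := by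
        rw [hdq₀]; constructor <;> linarith
      obtain ⟨r, hr, hdr⟩ := Bdry_preconnected.intermediate_value hq₀ hp₀ hdc h0mem
      exact ⟨r, hr, hdr⟩
  obtain ⟨r, hr, hdr⟩ := hmain
  have := hdexp r hr
  rw [hdr] at this
  simp at this
  norm_num at this

end
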